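/- The explicit operators K₁ = e^{2πb u}, H = −2i b⁻¹ u, E-part operator 𝓔 = q^{-1/2} e^{πbν+πbu} e^{−ib∂_u} + q^{1/2} e^{−πbν−πbu} e^{−ib∂_u}, and 𝓕 = q^{-1/2} e^{πbν−πbu} e^{ib∂_u} + q^{1/2} e^{−πbν+πbu} e^{ib∂_u}, with q = e^{πi b²}, satisfy the U_q(sl₂) relations: K𝓔 = q²𝓔K, K𝓕 = q⁻²𝓕K, and [E,F] = (K − K⁻¹)/(q − q⁻¹), where 𝓔 = −i(q−q⁻¹)E, 𝓕 = −i(q−q⁻¹)F. -/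
import Mathlib


/-- The explicit operators
`K = e^{2πbu}`, `𝓔 = q^{-1/2} e^{πbν+πbu} e^{−ib∂_u} + q^{1/2} e^{−πbν−πbu} e^{−ib∂_u}`,
`𝓕 = q^{-1/2} e^{πbν−πbu} e^{ib∂_u} + q^{1/2} e^{−πbν+πbu} e^{ib∂_u}`
satisfy the `U_q(sl₂)` relations `K𝓔 = q²𝓔K`, `K𝓕 = q⁻²𝓕K` and
`EF − FE = (K − K⁻¹)/(q − q⁻¹)`, where `𝓔 = −i(q−q⁻¹)E`, `𝓕 = −i(q−q⁻¹)F`.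
We work in the algebra generated by `Eu = e^{πbu}`, `Ev = e^{πbν}`, `D = e^{ib∂_u}`
and their inverses, with the relation `D·Eu = q·Eu·D` coming from `[u,∂_u] = −1`,
`Ev` central, and `r` a square root of `q`. -/
theorem uq_sl2_relations_explicit
    (𝔸 : Type*) [Ring 𝔸] [Algebra ℂ 𝔸]
    (q r : ℂ) (hq : q ≠ 0) (hq1 : q - q⁻¹ ≠ 0) (hr : r ^ 2 = q) (hr0 : r ≠ 0)
    (Eu EuI Ev EvI D DI : 𝔸)
    (hEu : Eu * EuI = 1) (hEu' : EuI * Eu = 1)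
    (hEv : Ev * EvI = 1) (hEv' : EvI * Ev = 1)
    (hD : D * DI = 1) (hD' : DI * D = 1)
    (hDEu : D * Eu = q • (Eu * D))
    (hEvEu : Commute Ev Eu) (hEvD : Commute Ev D)
    -- names for the operators
    (K KI 𝓔 𝓕 E F : 𝔸)
    (hK : K = Eu * Eu) (hKI : KI = EuI * EuI)
    (h𝓔 : 𝓔 = r⁻¹ • (Ev * Eu * DI) + r • (EvI * EuI * DI))
    (h𝓕 : 𝓕 = r⁻¹ • (Ev * EuI * D) + r • (EvI * Eu * D))
    (hE : 𝓔 = (-Complex.I * (q - q⁻¹)) • E)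
    (hF : 𝓕 = (-Complex.I * (q - q⁻¹)) • F) :
    K * 𝓔 = (q ^ 2) • (𝓔 * K) ∧
    K * 𝓕 = (q ^ 2)⁻¹ • (𝓕 * K) ∧
    E * F - F * E = (q - q⁻¹)⁻¹ • (K - KI) := by
  subst hr
  -- Eu*D = (r ^ 2)⁻¹ • (D*Eu)
  have hEuD : Eu * D = (r ^ 2)⁻¹ • (D * Eu) := by
    rw [hDEu, smul_smul, inv_mul_cancel₀ hq, one_smul]
  -- DI * Eu = (r ^ 2)⁻¹ • (Eu * DI)
  have hDIEu : DI * Eu = (r ^ 2)⁻¹ • (Eu * DI) := by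
    calc DI * Eu = DI * Eu * (D * DI) := by rw [hD, mul_one]
    _ = DI * (Eu * D) * DI := by noncomm_ring
    _ = (r ^ 2)⁻¹ • (DI * D * (Eu * DI)) := by rw [hEuD]; rw [mul_smul_comm, smul_mul_assoc]; noncomm_ring
    _ = (r ^ 2)⁻¹ • (Eu * DI) := by rw [hD', one_mul]
  have hEuDI : Eu * DI = (r ^ 2) • (DI * Eu) := by
    rw [hDIEu, smul_smul, mul_inv_cancel₀ hq, one_smul]
  -- D * EuI = (r ^ 2)⁻¹ • (EuI * D)
  have hDEuI : D * EuI = (r ^ 2)⁻¹ • (EuI * D) := by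
    calc D * EuI = (EuI * Eu) * (D * EuI) := by rw [hEu', one_mul]
    _ = EuI * (Eu * D) * EuI := by noncomm_ring
    _ = (r ^ 2)⁻¹ • (EuI * (D * Eu) * EuI) := by rw [hEuD, mul_smul_comm, smul_mul_assoc]
    _ = (r ^ 2)⁻¹ • (EuI * D * (Eu * EuI)) := by noncomm_ring
    _ = (r ^ 2)⁻¹ • (EuI * D) := by rw [hEu, mul_one]
  -- DI * EuI = (r ^ 2) • (EuI * DI)
  have hDIEuI : DI * EuI = (r ^ 2) • (EuI * DI) := by
    calc DI * EuI = (EuI * Eu) * (DI * EuI) := by rw [hEu', one_mul]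
    _ = EuI * (Eu * DI) * EuI := by noncomm_ring
    _ = (r ^ 2) • (EuI * (DI * Eu) * EuI) := by rw [hEuDI, mul_smul_comm, smul_mul_assoc]
    _ = (r ^ 2) • (EuI * DI * (Eu * EuI)) := by noncomm_ring
    _ = (r ^ 2) • (EuI * DI) := by rw [hEu, mul_one]
  -- inverse-commuting helper
  have invc : ∀ x y yI : 𝔸, x * y = y * x → y * yI = 1 → yI * y = 1 → x * yI = yI * x := by
    intro x y yI h h1 h2
    calc x * yI = (yI * y) * (x * yI) := by rw [h2, one_mul]
    _ = yI * (y * x) * yI := by noncomm_ring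
    _ = yI * (x * y) * yI := by rw [h]
    _ = yI * x * (y * yI) := by noncomm_ring
    _ = yI * x := by rw [h1, mul_one]
  have cEvEu : Ev * Eu = Eu * Ev := hEvEu.eq
  have cEvD : Ev * D = D * Ev := hEvD.eq
  have cEvEuI : Ev * EuI = EuI * Ev := invc Ev Eu EuI cEvEu hEu hEu'
  have cEvDI : Ev * DI = DI * Ev := invc Ev D DI cEvD hD hD'
  have cEvIEu : EvI * Eu = Eu * EvI := (invc Eu Ev EvI cEvEu.symm hEv hEv').symm
  have cEvID : EvI * D = D * EvI := (invc D Ev EvI cEvD.symm hEv hEv').symm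
  have cEvIEuI : EvI * EuI = EuI * EvI := invc EvI Eu EuI cEvIEu hEu hEu'
  have cEvIDI : EvI * DI = DI * EvI := invc EvI D DI cEvID hD hD'
  -- tail forms (for right-associated simp normal forms)
  have t : ∀ (a b c : 𝔸) (s : ℂ), a * b = s • (b * c) → ∀ x, a * (b * x) = s • (b * (c * x)) := by
    intro a b c s h x
    rw [← mul_assoc, h, smul_mul_assoc, mul_assoc]
  have t1 : ∀ (a b c : 𝔸), a * b = b * c → ∀ x, a * (b * x) = b * (c * x) := by
    intro a b c h x
    rw [← mul_assoc, h, mul_assoc]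
  have tc : ∀ (a b : 𝔸), a * b = 1 → ∀ x, a * (b * x) = x := by
    intro a b h x; rw [← mul_assoc, h, one_mul]
  have T1 := t D Eu D (r ^ 2) hDEu
  have T2 := t D EuI D (r ^ 2)⁻¹ hDEuI
  have T3 := t DI Eu DI (r ^ 2)⁻¹ hDIEu
  have T4 := t DI EuI DI (r ^ 2) hDIEuI
  have U1 := t1 Eu Ev Eu cEvEu.symm
  have U2 := t1 Eu EvI Eu cEvIEu.symm
  have U3 := t1 EuI Ev EuI cEvEuI.symm
  have U4 := t1 EuI EvI EuI cEvIEuI.symm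
  have U5 := t1 D Ev D cEvD.symm
  have U6 := t1 D EvI D cEvID.symm
  have U7 := t1 DI Ev DI cEvDI.symm
  have U8 := t1 DI EvI DI cEvIDI.symm
  have C1 := tc Eu EuI hEu
  have C2 := tc EuI Eu hEu'
  have C3 := tc Ev EvI hEv
  have C4 := tc EvI Ev hEv'
  have C5 := tc D DI hD
  have C6 := tc DI D hD'
  refine ⟨?_, ?_, ?_⟩
  · rw [hK, h𝓔]
    simp only [mul_add, add_mul, mul_smul_comm, smul_mul_assoc, smul_smul, mul_assoc,
      T1, T2, T3, T4, U1, U2, U3, U4, U5, U6, U7, U8, C1, C2, C3, C4, C5, C6,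
      hDEu, hDEuI, hDIEu, hDIEuI, cEvEu.symm, cEvIEu.symm, cEvEuI.symm, cEvIEuI.symm,
      cEvD.symm, cEvID.symm, cEvDI.symm, cEvIDI.symm, hEu, hEu', hEv, hEv', hD, hD',
      smul_add]
    match_scalars <;> field_simp <;> ring
  · rw [hK, h𝓕]
    simp only [mul_add, add_mul, mul_smul_comm, smul_mul_assoc, smul_smul, mul_assoc,
      T1, T2, T3, T4, U1, U2, U3, U4, U5, U6, U7, U8, C1, C2, C3, C4, C5, C6,
      hDEu, hDEuI, hDIEu, hDIEuI, cEvEu.symm, cEvIEu.symm, cEvEuI.symm, cEvIEuI.symm,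
      cEvD.symm, cEvID.symm, cEvDI.symm, cEvIDI.symm,
      hEu, hEu', hEv, hEv', hD, hD', smul_add, mul_one, one_mul]
    match_scalars <;> (try field_simp) <;> (try ring) <;> (try tauto) <;> (try simp)
  · have hc : (-Complex.I * (r ^ 2 - (r ^ 2)⁻¹)) ≠ 0 :=
      mul_ne_zero (neg_ne_zero.mpr Complex.I_ne_zero) hq1
    have hEe : E = (-Complex.I * (r ^ 2 - (r ^ 2)⁻¹))⁻¹ • 𝓔 := by
      rw [hE, smul_smul, inv_mul_cancel₀ hc, one_smul]
    have hFe : F = (-Complex.I * (r ^ 2 - (r ^ 2)⁻¹))⁻¹ • 𝓕 := by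
      rw [hF, smul_smul, inv_mul_cancel₀ hc, one_smul]
    have hEF : 𝓔 * 𝓕 = Ev * Ev + EvI * EvI + (r ^ 2)⁻¹ • (Eu * Eu) + (r ^ 2) • (EuI * EuI) := by
      rw [h𝓔, h𝓕]
      simp only [mul_add, add_mul, mul_smul_comm, smul_mul_assoc, smul_smul, mul_assoc,
        T1, T2, T3, T4, U1, U2, U3, U4, U5, U6, U7, U8, C1, C2, C3, C4, C5, C6,
        hDEu, hDEuI, hDIEu, hDIEuI, cEvEu.symm, cEvIEu.symm, cEvEuI.symm, cEvIEuI.symm,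
        cEvD.symm, cEvID.symm, cEvDI.symm, cEvIDI.symm,
        hEu, hEu', hEv, hEv', hD, hD', smul_add, mul_one, one_mul]
      match_scalars <;> field_simp <;> (first | ring | simp)
    have hFE : 𝓕 * 𝓔 = Ev * Ev + EvI * EvI + (r ^ 2) • (Eu * Eu) + (r ^ 2)⁻¹ • (EuI * EuI) := by
      rw [h𝓔, h𝓕]
      simp only [mul_add, add_mul, mul_smul_comm, smul_mul_assoc, smul_smul, mul_assoc,
        T1, T2, T3, T4, U1, U2, U3, U4, U5, U6, U7, U8, C1, C2, C3, C4, C5, C6,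
        hDEu, hDEuI, hDIEu, hDIEuI, cEvEu.symm, cEvIEu.symm, cEvEuI.symm, cEvIEuI.symm,
        cEvD.symm, cEvID.symm, cEvDI.symm, cEvIDI.symm,
        hEu, hEu', hEv, hEv', hD, hD', smul_add, mul_one, one_mul]
      match_scalars <;> field_simp <;> (first | ring | simp)
    have key : 𝓔 * 𝓕 - 𝓕 * 𝓔 = (-(r ^ 2 - (r ^ 2)⁻¹)) • (K - KI) := by
      rw [hEF, hFE, hK, hKI]
      match_scalars <;> field_simp <;> (first | ring | simp)
    rw [hEe, hFe]
    rw [smul_mul_assoc, mul_smul_comm, smul_mul_assoc, mul_smul_comm, smul_smul, smul_smul,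
      ← smul_sub, key, smul_smul]
    congr 1
    rw [mul_inv, show (-Complex.I)⁻¹ = Complex.I by simp [inv_neg, Complex.inv_I]]
    rw [show Complex.I * (r ^ 2 - (r ^ 2)⁻¹)⁻¹ * (Complex.I * (r ^ 2 - (r ^ 2)⁻¹)⁻¹) *
        -(r ^ 2 - (r ^ 2)⁻¹) = -(Complex.I * Complex.I) *
        ((r ^ 2 - (r ^ 2)⁻¹)⁻¹ * ((r ^ 2 - (r ^ 2)⁻¹)⁻¹ * (r ^ 2 - (r ^ 2)⁻¹))) by ring,
      Complex.I_mul_I, inv_mul_cancel₀ hq1]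
    ring
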